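/- arXiv:2210.16172 — 7 statements merged into one kernel-verified Lean document; each statement's English description precedes it below -/
import Mathlib

section
/- Define g(x) := (x² − 6x + 12)eˣ − (x² + 6x + 12). Then g(x) > 0 for all x > 0. -/
noncomputable def g (x : ℝ) : ℝ := (x^2 - 6*x + 12) * Real.exp x - (x^2 + 6*x + 12)

theorem g_pos : ∀ x : ℝ, 0 < x → 0 < g x := by
  intro x hx
  have hP := Real.sum_le_exp_of_nonneg hx.le 6
  simp [Finset.sum_range_succ, Nat.factorial] at hP
  have hq : 0 < x^2 - 6*x + 12 := by nlinarith [sq_nonneg (x - 3)]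
  unfold g
  nlinarith [mul_le_mul_of_nonneg_left hP hq.le, pow_pos hx 5, sq_nonneg (x - 1), mul_pos (pow_pos hx 5) (show (0:ℝ) < x^2 - x + 2 by nlinarith [sq_nonneg (x-1)])]
end

section
/- Let a, b, c be real numbers with a + b = −c, c > 0, a ≥ b (so b ≤ −c/2 < 0). Define r(x) := (b x + c)eˣ + a x − c. Then r(x) < 0 for all x > 0. -/
noncomputable def r (a b c x : ℝ) : ℝ := (b * x + c) * Real.exp x + a * x - c

theorem r_neg (a b c : ℝ) (hsum : a + b = -c) (hc : 0 < c) (hab : b ≤ a) :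
    ∀ x : ℝ, 0 < x → r a b c x < 0 := by
  have hb : 2 * b ≤ -c := by linarith
  set r1 : ℝ → ℝ := fun x => (b * x + b + c) * Real.exp x + a with hr1
  have hd : ∀ x : ℝ, HasDerivAt (r a b c) (r1 x) x := by
    intro x
    have h1 : HasDerivAt (fun x : ℝ => (b * x + c) * Real.exp x)
        ((b * x + b + c) * Real.exp x) x := by
      have := ((hasDerivAt_id x).const_mul b |>.add_const c).mul (Real.hasDerivAt_exp x)
      refine this.congr_deriv ?_; simp only [id_eq]; ring
    have := (h1.add ((hasDerivAt_id x).const_mul a)).sub_const c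
    refine this.congr_deriv ?_
    simp [hr1]
  have hd1 : ∀ x : ℝ, HasDerivAt r1 ((b * x + 2 * b + c) * Real.exp x) x := by
    intro x
    have h1 : HasDerivAt (fun x : ℝ => (b * x + b + c) * Real.exp x)
        ((b * x + 2 * b + c) * Real.exp x) x := by
      have := (((hasDerivAt_id x).const_mul b |>.add_const b).add_const c).mul
        (Real.hasDerivAt_exp x)
      refine this.congr_deriv ?_; simp only [id_eq]; ring
    simpa [hr1] using h1.add_const a
  have hanti1 : StrictAntiOn r1 (Set.Ici 0) := by
    apply StrictAntiOn.mono (s := Set.Ici (0:ℝ))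
      (strictAntiOn_of_deriv_neg (convex_Ici 0)
        (Continuous.continuousOn (by continuity)) ?_) le_rfl
    intro x hx
    rw [interior_Ici] at hx
    rw [(hd1 x).deriv]
    have hbneg : b < 0 := by linarith
    have : b * x + 2 * b + c < 0 := by nlinarith [hx.out]
    exact mul_neg_of_neg_of_pos this (Real.exp_pos x)
  have hr1neg : ∀ x : ℝ, 0 < x → r1 x < 0 := by
    intro x hx
    have := hanti1 (Set.self_mem_Ici) (le_of_lt hx : (0:ℝ) ≤ x) hx
    have h0 : r1 0 = 0 := by simp [hr1]; linarith
    linarith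
  have hanti : StrictAntiOn (r a b c) (Set.Ici 0) := by
    apply strictAntiOn_of_deriv_neg (convex_Ici 0)
      (Continuous.continuousOn (by unfold r; continuity))
    intro x hx
    rw [interior_Ici] at hx
    rw [(hd x).deriv]
    exact hr1neg x hx
  intro x hx
  have := hanti (Set.self_mem_Ici) (le_of_lt hx : (0:ℝ) ≤ x) hx
  have h0 : r a b c 0 = 0 := by simp [r]
  linarith
end

section
/- With f as the density f(x) = (λᵢμ)/(a−b)·(e^{ax} − e^{bx}) on x ≥ 0 (a > b the negative roots of s² + (λ+μ)s + λᵢμ = 0), the second moment is ∫₀^∞ x² f(x) dx = 2(λ+μ)²/(λᵢ²μ²) − 2/(λᵢμ), and hence the variance equals (λ+μ)²/(λᵢ²μ²) − 2/(λᵢμ). -/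
open MeasureTheory

lemma aoi_aux_integral_pow (n : ℕ) {r : ℝ} (hr : 0 < r) :
    ∫ x in Set.Ioi (0:ℝ), x ^ n * Real.exp (-(r * x))
      = (n.factorial : ℝ) / r ^ (n + 1) := by
  have h := Real.integral_rpow_mul_exp_neg_mul_Ioi
    (a := (n : ℝ) + 1) (r := r) (by positivity) hr
  have hcongr : ∫ x in Set.Ioi (0:ℝ), x ^ ((n : ℝ) + 1 - 1) * Real.exp (-(r * x))
      = ∫ x in Set.Ioi (0:ℝ), x ^ n * Real.exp (-(r * x)) := by
    refine setIntegral_congr_fun measurableSet_Ioi (fun x hx => ?_)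
    rw [add_sub_cancel_right, Real.rpow_natCast]
  rw [hcongr] at h
  rw [h, Real.Gamma_nat_eq_factorial,
    show (n : ℝ) + 1 = ((n + 1 : ℕ) : ℝ) by push_cast; ring,
    Real.rpow_natCast, div_pow, one_pow]
  ring

lemma aoi_aux_integrable (n : ℕ) {r : ℝ} (hr : 0 < r) :
    IntegrableOn (fun x => x ^ n * Real.exp (-(r * x))) (Set.Ioi (0:ℝ)) := by
  have h := integrableOn_rpow_mul_exp_neg_mul_rpow
    (p := 1) (s := (n : ℝ)) (b := r) (lt_of_lt_of_le neg_one_lt_zero n.cast_nonneg) one_pos hr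
  refine h.congr_fun (fun x hx => ?_) measurableSet_Ioi
  beta_reduce
  rw [Real.rpow_natCast, Real.rpow_one, neg_mul]

theorem aoi_second_moment_and_variance (lam mu li a b : ℝ)
    (hlam : 0 < lam) (hmu : 0 < mu) (hli : 0 < li)
    (hra : a^2 + (lam + mu) * a + li * mu = 0)
    (hrb : b^2 + (lam + mu) * b + li * mu = 0)
    (hab : b < a) (ha : a < 0) (hb : b < 0) :
    (∫ x in Set.Ioi (0:ℝ),
        x^2 * (li * mu / (a - b) * (Real.exp (a * x) - Real.exp (b * x)))
      = 2 * (lam + mu)^2 / (li^2 * mu^2) - 2 / (li * mu)) ∧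
    ((∫ x in Set.Ioi (0:ℝ),
        x^2 * (li * mu / (a - b) * (Real.exp (a * x) - Real.exp (b * x))))
      - (∫ x in Set.Ioi (0:ℝ),
          x * (li * mu / (a - b) * (Real.exp (a * x) - Real.exp (b * x))))^2
      = (lam + mu)^2 / (li^2 * mu^2) - 2 / (li * mu)) := by
  have hne : a - b ≠ 0 := sub_ne_zero.mpr hab.ne'
  have ha0 : a ≠ 0 := ha.ne
  have hb0 : b ≠ 0 := hb.ne
  have hX : li * mu ≠ 0 := by positivity
  have hsum : a + b = -(lam + mu) := by
    have h1 : (a - b) * (a + b + (lam + mu)) = 0 := by linear_combination hra - hrb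
    rcases mul_eq_zero.mp h1 with h | h
    · exact absurd h hne
    · linarith
  have hprod : a * b = li * mu := by linear_combination a * hsum - hra
  have hr : (0:ℝ) < -a := by linarith
  have hs : (0:ℝ) < -b := by linarith
  set c := li * mu / (a - b) with hc
  have key : ∀ n : ℕ, ∫ x in Set.Ioi (0:ℝ),
      x ^ n * (c * (Real.exp (a * x) - Real.exp (b * x)))
      = c * ((n.factorial : ℝ) / (-a) ^ (n + 1))
        - c * ((n.factorial : ℝ) / (-b) ^ (n + 1)) := by
    intro n
    have step : ∫ x in Set.Ioi (0:ℝ),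
        x ^ n * (c * (Real.exp (a * x) - Real.exp (b * x)))
        = ∫ x in Set.Ioi (0:ℝ),
          (c * (x ^ n * Real.exp (-(-a * x))) - c * (x ^ n * Real.exp (-(-b * x)))) := by
      refine setIntegral_congr_fun measurableSet_Ioi (fun x _ => ?_)
      rw [show -(-a * x) = a * x by ring, show -(-b * x) = b * x by ring]
      ring
    rw [step, integral_sub ((aoi_aux_integrable n hr).const_mul c)
        ((aoi_aux_integrable n hs).const_mul c),
      integral_const_mul, integral_const_mul,
      aoi_aux_integral_pow n hr, aoi_aux_integral_pow n hs]
  have I2 := key 2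
  have I1 := key 1
  norm_num at I2 I1
  have hx2 : (∫ x in Set.Ioi (0:ℝ),
      x ^ 2 * (li * mu / (a - b) * (Real.exp (a * x) - Real.exp (b * x))))
      = 2 * (lam + mu) ^ 2 / (li ^ 2 * mu ^ 2) - 2 / (li * mu) := by
    rw [← hc, I2, hc, show lam + mu = -(a + b) by linarith,
      show li ^ 2 * mu ^ 2 = (li * mu) * (li * mu) by ring, ← hprod]
    field_simp
    ring
  have hx1 : (∫ x in Set.Ioi (0:ℝ),
      x * (li * mu / (a - b) * (Real.exp (a * x) - Real.exp (b * x))))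
      = (lam + mu) / (li * mu) := by
    rw [← hc, I1, hc, show lam + mu = -(a + b) by linarith, ← hprod]
    field_simp
    ring
  refine ⟨hx2, ?_⟩
  rw [hx2, hx1]
  field_simp
  ring
end

section
/- Fix λ, μ > 0 and w > 0. With a, b, D as functions of λᵢ as above, the map λᵢ ↦ (a e^{bw} − b e^{aw})/(a − b) is strictly convex on the interval of λᵢ where D(λᵢ) > 0. -/
noncomputable def PA (lam mu w li : ℝ) : ℝ :=
  let D := Real.sqrt ((lam + mu)^2 - 4 * li * mu)
  let a := (-(lam + mu) + D)/2
  let b := (-(lam + mu) - D)/2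
  (a * Real.exp (b * w) - b * Real.exp (a * w)) / (a - b)

open Real

private lemma pos_of_hasDerivAt (f f' : ℝ → ℝ) (hd : ∀ x, HasDerivAt f (f' x) x)
    (h0 : f 0 = 0) (hp : ∀ x, 0 < x → 0 < f' x) {x : ℝ} (hx : 0 < x) : 0 < f x := by
  have hmono : StrictMonoOn f (Set.Ici 0) := by
    apply strictMonoOn_of_deriv_pos (convex_Ici 0)
    · exact fun y _ => (hd y).differentiableAt.continuousAt.continuousWithinAt
    · intro y hy
      rw [interior_Ici] at hy
      rw [(hd y).deriv]
      exact hp y hy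
  have h := hmono Set.self_mem_Ici (Set.mem_Ici.mpr hx.le) hx
  rwa [h0] at h

private lemma g2_pos {x : ℝ} (hx : 0 < x) : 0 < Real.exp x * (x^2 - 2*x + 2) - 2 := by
  apply pos_of_hasDerivAt _ (fun y => Real.exp y * y^2) ?_ (by norm_num) ?_ hx
  · intro y
    have h1 : HasDerivAt (fun y : ℝ => y^2) (2*y) y := by simpa using hasDerivAt_pow 2 y
    have h2 : HasDerivAt (fun y : ℝ => 2*y) 2 y := by
      simpa using (hasDerivAt_id y).const_mul (2:ℝ)
    have hpoly : HasDerivAt (fun y : ℝ => y^2 - 2*y + 2) (2*y - 2) y :=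
      (h1.sub h2).add_const 2
    have h := ((Real.hasDerivAt_exp y).mul hpoly).sub_const 2
    refine h.congr_deriv ?_
    ring
  · intro y hy
    exact mul_pos (Real.exp_pos y) (pow_pos hy 2)

private lemma gp_pos {x : ℝ} (hx : 0 < x) : 0 < Real.exp x * (x^2 - 4*x + 6) - (2*x + 6) := by
  apply pos_of_hasDerivAt _ (fun y => Real.exp y * (y^2 - 2*y + 2) - 2) ?_ (by norm_num) ?_ hx
  · intro y
    have h1 : HasDerivAt (fun y : ℝ => y^2) (2*y) y := by simpa using hasDerivAt_pow 2 y
    have h2 : HasDerivAt (fun y : ℝ => 4*y) 4 y := by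
      simpa using (hasDerivAt_id y).const_mul (4:ℝ)
    have hpoly : HasDerivAt (fun y : ℝ => y^2 - 4*y + 6) (2*y - 4) y :=
      (h1.sub h2).add_const 6
    have h3 : HasDerivAt (fun y : ℝ => 2*y) 2 y := by
      simpa using (hasDerivAt_id y).const_mul (2:ℝ)
    have hlin : HasDerivAt (fun y : ℝ => 2*y + 6) 2 y := h3.add_const 6
    have h := ((Real.hasDerivAt_exp y).mul hpoly).sub hlin
    refine h.congr_deriv ?_
    ring
  · intro y hy
    exact g2_pos hy

private lemma g_pos_s10 {x : ℝ} (hx : 0 < x) :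
    0 < Real.exp x * (x^2 - 6*x + 12) - (x^2 + 6*x + 12) := by
  apply pos_of_hasDerivAt _ (fun y => Real.exp y * (y^2 - 4*y + 6) - (2*y + 6)) ?_
    (by norm_num) ?_ hx
  · intro y
    have h1 : HasDerivAt (fun y : ℝ => y^2) (2*y) y := by simpa using hasDerivAt_pow 2 y
    have h2 : HasDerivAt (fun y : ℝ => 6*y) 6 y := by
      simpa using (hasDerivAt_id y).const_mul (6:ℝ)
    have hpoly : HasDerivAt (fun y : ℝ => y^2 - 6*y + 12) (2*y - 6) y :=
      (h1.sub h2).add_const 12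
    have hquad : HasDerivAt (fun y : ℝ => y^2 + 6*y + 12) (2*y + 6) y :=
      (h1.add h2).add_const 12
    have h := ((Real.hasDerivAt_exp y).mul hpoly).sub hquad
    refine h.congr_deriv ?_
    ring
  · intro y hy
    exact gp_pos hy

private noncomputable def Gf (lam mu w y : ℝ) : ℝ :=
  mu / (Real.sqrt ((lam + mu)^2 - 4 * y * mu))^3 *
    ((Real.sqrt ((lam + mu)^2 - 4 * y * mu) *
        ((-(lam + mu) + Real.sqrt ((lam + mu)^2 - 4 * y * mu))/2) * w - (lam + mu)) *
      Real.exp ((-(lam + mu) - Real.sqrt ((lam + mu)^2 - 4 * y * mu))/2 * w) +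
    (Real.sqrt ((lam + mu)^2 - 4 * y * mu) *
        ((-(lam + mu) - Real.sqrt ((lam + mu)^2 - 4 * y * mu))/2) * w + (lam + mu)) *
      Real.exp ((-(lam + mu) + Real.sqrt ((lam + mu)^2 - 4 * y * mu))/2 * w))

private noncomputable def Hf (lam mu w y : ℝ) : ℝ :=
  mu^2 / (Real.sqrt ((lam + mu)^2 - 4 * y * mu))^5 *
    (((Real.sqrt ((lam + mu)^2 - 4 * y * mu))^2 *
        ((-(lam + mu) + Real.sqrt ((lam + mu)^2 - 4 * y * mu))/2) * w^2
      - 2*(Real.sqrt ((lam + mu)^2 - 4 * y * mu))^2*w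
      + 6*(Real.sqrt ((lam + mu)^2 - 4 * y * mu)) *
        ((-(lam + mu) + Real.sqrt ((lam + mu)^2 - 4 * y * mu))/2)*w
      - 6*(lam + mu)) *
      Real.exp ((-(lam + mu) - Real.sqrt ((lam + mu)^2 - 4 * y * mu))/2 * w) +
    (2*(Real.sqrt ((lam + mu)^2 - 4 * y * mu))^2*w
      - (Real.sqrt ((lam + mu)^2 - 4 * y * mu))^2 *
        ((-(lam + mu) - Real.sqrt ((lam + mu)^2 - 4 * y * mu))/2) * w^2
      + 6*(Real.sqrt ((lam + mu)^2 - 4 * y * mu)) *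
        ((-(lam + mu) - Real.sqrt ((lam + mu)^2 - 4 * y * mu))/2)*w
      + 6*(lam + mu)) *
      Real.exp ((-(lam + mu) + Real.sqrt ((lam + mu)^2 - 4 * y * mu))/2 * w))

private lemma hasDerivAt_q (lam mu x : ℝ) :
    HasDerivAt (fun y : ℝ => (lam + mu)^2 - 4 * y * mu) (-(4*mu)) x := by
  have h1 : HasDerivAt (fun y : ℝ => 4 * y * mu) (4*mu) x := by
    simpa using ((hasDerivAt_id x).const_mul (4:ℝ)).mul_const mu
  simpa using h1.const_sub ((lam + mu)^2)

private lemma hasDerivAt_R (lam mu x : ℝ) (hq : 0 < (lam + mu)^2 - 4 * x * mu) :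
    HasDerivAt (fun y => Real.sqrt ((lam + mu)^2 - 4 * y * mu))
      (-(4*mu) / (2 * Real.sqrt ((lam + mu)^2 - 4 * x * mu))) x :=
  (hasDerivAt_q lam mu x).sqrt hq.ne'

set_option maxHeartbeats 1600000 in
private lemma hasDerivAt_PA' (lam mu w x : ℝ) (hq : 0 < (lam + mu)^2 - 4 * x * mu) :
    HasDerivAt (PA lam mu w) (Gf lam mu w x) x := by
  have hr : 0 < Real.sqrt ((lam + mu)^2 - 4 * x * mu) := Real.sqrt_pos.mpr hq
  have hR := hasDerivAt_R lam mu x hq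
  have hPAeq : PA lam mu w = fun li =>
      ((-(lam + mu) + Real.sqrt ((lam + mu)^2 - 4 * li * mu))/2 *
          Real.exp ((-(lam + mu) - Real.sqrt ((lam + mu)^2 - 4 * li * mu))/2 * w) -
        (-(lam + mu) - Real.sqrt ((lam + mu)^2 - 4 * li * mu))/2 *
          Real.exp ((-(lam + mu) + Real.sqrt ((lam + mu)^2 - 4 * li * mu))/2 * w)) /
      ((-(lam + mu) + Real.sqrt ((lam + mu)^2 - 4 * li * mu))/2 -
        (-(lam + mu) - Real.sqrt ((lam + mu)^2 - 4 * li * mu))/2) := rfl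
  rw [hPAeq]
  unfold Gf
  have hA := (hR.const_add (-(lam + mu))).div_const 2
  have hB := (hR.const_sub (-(lam + mu))).div_const 2
  have heA := (hA.mul_const w).exp
  have heB := (hB.mul_const w).exp
  have hDne : ((-(lam + mu) + Real.sqrt ((lam + mu)^2 - 4 * x * mu))/2 -
      (-(lam + mu) - Real.sqrt ((lam + mu)^2 - 4 * x * mu))/2) ≠ 0 := by
    have h : ((-(lam + mu) + Real.sqrt ((lam + mu)^2 - 4 * x * mu))/2 -
        (-(lam + mu) - Real.sqrt ((lam + mu)^2 - 4 * x * mu))/2)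
        = Real.sqrt ((lam + mu)^2 - 4 * x * mu) := by ring
    rw [h]; exact hr.ne'
  have h := ((hA.mul heB).sub (hB.mul heA)).div (hA.sub hB) hDne
  refine h.congr_deriv ?_
  simp only [Pi.sub_apply, Pi.mul_apply, Pi.div_apply, Pi.pow_apply]
  rw [show ((-(lam + mu) + Real.sqrt ((lam + mu)^2 - 4 * x * mu))/2 -
      (-(lam + mu) - Real.sqrt ((lam + mu)^2 - 4 * x * mu))/2)
      = Real.sqrt ((lam + mu)^2 - 4 * x * mu) from by ring]
  generalize hQ : (lam + mu)^2 - 4 * x * mu = Q at hr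
  field_simp [hr.ne']
  ring

set_option maxHeartbeats 1600000 in
private lemma hasDerivAt_Gf (lam mu w x : ℝ) (hq : 0 < (lam + mu)^2 - 4 * x * mu) :
    HasDerivAt (Gf lam mu w) (Hf lam mu w x) x := by
  have hr : 0 < Real.sqrt ((lam + mu)^2 - 4 * x * mu) := Real.sqrt_pos.mpr hq
  have hR := hasDerivAt_R lam mu x hq
  have hGeq : Gf lam mu w = fun y =>
      mu / (Real.sqrt ((lam + mu)^2 - 4 * y * mu))^3 *
        ((Real.sqrt ((lam + mu)^2 - 4 * y * mu) *
            ((-(lam + mu) + Real.sqrt ((lam + mu)^2 - 4 * y * mu))/2) * w - (lam + mu)) *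
          Real.exp ((-(lam + mu) - Real.sqrt ((lam + mu)^2 - 4 * y * mu))/2 * w) +
        (Real.sqrt ((lam + mu)^2 - 4 * y * mu) *
            ((-(lam + mu) - Real.sqrt ((lam + mu)^2 - 4 * y * mu))/2) * w + (lam + mu)) *
          Real.exp ((-(lam + mu) + Real.sqrt ((lam + mu)^2 - 4 * y * mu))/2 * w)) := rfl
  rw [hGeq]
  unfold Hf
  have hA := (hR.const_add (-(lam + mu))).div_const 2
  have hB := (hR.const_sub (-(lam + mu))).div_const 2
  have heA := (hA.mul_const w).exp
  have heB := (hB.mul_const w).exp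
  have hpow := hR.pow 3
  have hc := (hasDerivAt_const x mu).div hpow (pow_ne_zero 3 hr.ne')
  have hP := ((((hR.mul hA).mul_const w).sub_const (lam + mu)).mul heB).add
    ((((hR.mul hB).mul_const w).add_const (lam + mu)).mul heA)
  have h := hc.mul hP
  refine h.congr_deriv ?_
  simp only [Pi.add_apply, Pi.sub_apply, Pi.mul_apply, Pi.div_apply, Pi.pow_apply]
  generalize hQ : (lam + mu)^2 - 4 * x * mu = Q at hr
  push_cast
  norm_num
  field_simp [hr.ne']
  ring

theorem PA_strictConvex (lam mu w : ℝ) (hlam : 0 < lam) (hmu : 0 < mu) (hw : 0 < w) :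
    StrictConvexOn ℝ
      {li | li ∈ Set.Ioc 0 lam ∧ 4 * li * mu < (lam + mu)^2}
      (PA lam mu w) := by
  have hs : 0 < lam + mu := by linarith
  have h4mu : (0:ℝ) < 4 * mu := by linarith
  have hSeq : {li | li ∈ Set.Ioc 0 lam ∧ 4 * li * mu < (lam + mu)^2}
      = Set.Ioc 0 lam ∩ Set.Iio ((lam + mu)^2 / (4 * mu)) := by
    ext y
    simp only [Set.mem_setOf_eq, Set.mem_inter_iff, Set.mem_Iio]
    constructor
    · rintro ⟨h1, h2⟩
      refine ⟨h1, ?_⟩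
      rw [lt_div_iff₀ h4mu]
      nlinarith
    · rintro ⟨h1, h2⟩
      rw [lt_div_iff₀ h4mu] at h2
      exact ⟨h1, by nlinarith⟩
  rw [hSeq]
  apply strictConvexOn_of_deriv2_pos ((convex_Ioc 0 lam).inter (convex_Iio _))
  · -- continuity
    intro y hy
    obtain ⟨⟨hy0, _⟩, hyc⟩ := hy
    rw [Set.mem_Iio, lt_div_iff₀ h4mu] at hyc
    have hq : 0 < (lam + mu)^2 - 4 * y * mu := by nlinarith
    exact (hasDerivAt_PA' lam mu w y hq).differentiableAt.continuousAt.continuousWithinAt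
  · intro x hx
    rw [interior_inter, interior_Ioc, interior_Iio] at hx
    obtain ⟨⟨hx0, hxl⟩, hxc⟩ := hx
    rw [Set.mem_Iio, lt_div_iff₀ h4mu] at hxc
    have hq : 0 < (lam + mu)^2 - 4 * x * mu := by nlinarith
    have hO : IsOpen {y : ℝ | 0 < (lam + mu)^2 - 4 * y * mu} := by
      have hc : Continuous fun y : ℝ => (lam + mu)^2 - 4 * y * mu := by continuity
      exact isOpen_lt continuous_const hc
    have hev : deriv (PA lam mu w) =ᶠ[nhds x] Gf lam mu w :=
      Filter.eventuallyEq_of_mem (hO.mem_nhds hq)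
        (fun y hy => (hasDerivAt_PA' lam mu w y hy).deriv)
    have h2 : deriv^[2] (PA lam mu w) x = Hf lam mu w x := by
      show deriv (deriv (PA lam mu w)) x = Hf lam mu w x
      rw [hev.deriv_eq, (hasDerivAt_Gf lam mu w x hq).deriv]
    rw [h2]
    unfold Hf
    set r := Real.sqrt ((lam + mu)^2 - 4 * x * mu) with hrdef
    have hr : 0 < r := Real.sqrt_pos.mpr hq
    have hrs : r < lam + mu := by
      rw [hrdef]
      exact (Real.sqrt_lt' hs).mpr (by nlinarith)
    have hrw : 0 < r * w := mul_pos hr hw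
    have hgp := gp_pos hrw
    have hg := g_pos_s10 hrw
    have hsum : 0 < r * w * (Real.exp (r*w) * ((r*w)^2 - 4*(r*w) + 6) - (2*(r*w) + 6))
        + (-((-(lam + mu) + r)/2) * w) *
          (Real.exp (r*w) * ((r*w)^2 - 6*(r*w) + 12) - ((r*w)^2 + 6*(r*w) + 12)) :=
      add_pos (mul_pos hrw hgp)
        (mul_pos (mul_pos (by linarith : (0:ℝ) < -((-(lam + mu) + r)/2)) hw) hg)
    have hkey : ((r^2 * ((-(lam + mu) + r)/2) * w^2 - 2*r^2*w
          + 6*r*((-(lam + mu) + r)/2)*w - 6*(lam + mu)) *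
          Real.exp ((-(lam + mu) - r)/2 * w) +
        (2*r^2*w - r^2 * ((-(lam + mu) - r)/2) * w^2
          + 6*r*((-(lam + mu) - r)/2)*w + 6*(lam + mu)) *
          Real.exp ((-(lam + mu) + r)/2 * w)) * w
        = Real.exp ((-(lam + mu) - r)/2 * w) *
          (r * w * (Real.exp (r*w) * ((r*w)^2 - 4*(r*w) + 6) - (2*(r*w) + 6))
            + (-((-(lam + mu) + r)/2) * w) *
              (Real.exp (r*w) * ((r*w)^2 - 6*(r*w) + 12) - ((r*w)^2 + 6*(r*w) + 12))) := by
      rw [show (-(lam + mu) + r)/2 * w = (-(lam + mu) - r)/2 * w + r*w from by ring,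
        Real.exp_add]
      ring
    have hE : 0 < (r^2 * ((-(lam + mu) + r)/2) * w^2 - 2*r^2*w
          + 6*r*((-(lam + mu) + r)/2)*w - 6*(lam + mu)) *
          Real.exp ((-(lam + mu) - r)/2 * w) +
        (2*r^2*w - r^2 * ((-(lam + mu) - r)/2) * w^2
          + 6*r*((-(lam + mu) - r)/2)*w + 6*(lam + mu)) *
          Real.exp ((-(lam + mu) + r)/2 * w) := by
      have h1 := mul_pos (Real.exp_pos ((-(lam + mu) - r)/2 * w)) hsum
      nlinarith [hkey, h1, hw]
    exact mul_pos (div_pos (by positivity) (by positivity)) hE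
end

section
/- For x ≥ 0 and a > b negative reals with a + b = −(λ+μ), ab = λᵢμ, the function x ↦ (λ+μ)(e^{−(λ+μ)x} + (b e^{bx} − a e^{ax})/(a − b)), extended by 0 for x < 0, is a probability density function (nonnegative with total integral 1). -/
open MeasureTheory

noncomputable def paoiPdf (lam mu a b : ℝ) (x : ℝ) : ℝ :=
  if 0 ≤ x then
    (lam + mu) * (Real.exp (-(lam + mu) * x)
      + (b * Real.exp (b * x) - a * Real.exp (a * x)) / (a - b))
  else 0

lemma integral_exp_mul_Ioi_zero {c : ℝ} (hc : c < 0) :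
    ∫ x in Set.Ioi (0:ℝ), Real.exp (c * x) = (-c)⁻¹ := by
  have hc' : 0 < -c := by linarith
  have h := MeasureTheory.integral_comp_mul_left_Ioi (fun x => Real.exp (-x)) 0 hc'
  simp only [mul_zero, smul_eq_mul] at h
  have h2 : (∫ x in Set.Ioi (0:ℝ), Real.exp (-(-c * x))) =
      (-c)⁻¹ * ∫ x in Set.Ioi (0:ℝ), Real.exp (-x) := h
  simp only [neg_mul, neg_neg] at h2
  rw [h2, integral_exp_neg_Ioi_zero, mul_one]

lemma integrableOn_exp_mul {c : ℝ} (hc : c < 0) :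
    IntegrableOn (fun x : ℝ => Real.exp (c * x)) (Set.Ioi 0) := by
  have := exp_neg_integrableOn_Ioi 0 (show (0:ℝ) < -c by linarith)
  simpa using this

lemma key_nonneg (a b : ℝ) (hab : b < a) (ha : a < 0) (hb : b < 0) {x : ℝ} (hx : 0 ≤ x) :
    0 ≤ (a - b) * Real.exp ((a + b) * x) + b * Real.exp (b * x) - a * Real.exp (a * x) := by
  set m : ℝ := (a + b) / 2 with hm
  set c : ℝ := (a - b) / 2 with hc
  have hcpos : 0 < c := by rw [hc]; linarith
  have hmneg : m < 0 := by rw [hm]; linarith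
  have hmc : m ≤ -c := by rw [hm, hc]; linarith
  have hmc2 : m ≤ c := by linarith
  set F : ℝ → ℝ := fun y => (a - b) * Real.exp (m * y) + b * Real.exp (-c * y)
      - a * Real.exp (c * y) with hF
  have hderiv : ∀ y : ℝ, HasDerivAt F
      ((a - b) * (Real.exp (m * y) * m) + b * (Real.exp (-c * y) * (-c))
        - a * (Real.exp (c * y) * c)) y := by
    intro y
    have h1 : HasDerivAt (fun y : ℝ => Real.exp (m * y)) (Real.exp (m * y) * m) y := by
      simpa using ((hasDerivAt_id y).const_mul m).exp
    have h2 : HasDerivAt (fun y : ℝ => Real.exp (-c * y)) (Real.exp (-c * y) * (-c)) y := by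
      simpa using ((hasDerivAt_id y).const_mul (-c)).exp
    have h3 : HasDerivAt (fun y : ℝ => Real.exp (c * y)) (Real.exp (c * y) * c) y := by
      simpa using ((hasDerivAt_id y).const_mul c).exp
    exact ((h1.const_mul (a - b)).add (h2.const_mul b)).sub (h3.const_mul a)
  have hderiv_nonneg : ∀ y ∈ Set.Ici (0:ℝ),
      0 ≤ (a - b) * (Real.exp (m * y) * m) + b * (Real.exp (-c * y) * (-c))
        - a * (Real.exp (c * y) * c) := by
    intro y hy
    have hy' : (0:ℝ) ≤ y := hy
    have e1 : Real.exp (m * y) ≤ Real.exp (-c * y) :=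
      Real.exp_le_exp.2 (by nlinarith)
    have e2 : Real.exp (m * y) ≤ Real.exp (c * y) :=
      Real.exp_le_exp.2 (by nlinarith)
    have key : 0 ≤ (-b) * (Real.exp (-c * y) - Real.exp (m * y))
        + (-a) * (Real.exp (c * y) - Real.exp (m * y)) := by
      have : 0 ≤ (-b) * (Real.exp (-c * y) - Real.exp (m * y)) :=
        mul_nonneg (by linarith) (by linarith)
      have : 0 ≤ (-a) * (Real.exp (c * y) - Real.exp (m * y)) :=
        mul_nonneg (by linarith) (by linarith)
      nlinarith [mul_nonneg (show (0:ℝ) ≤ -b by linarith) (sub_nonneg.2 e1),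
        mul_nonneg (show (0:ℝ) ≤ -a by linarith) (sub_nonneg.2 e2)]
    have hgoal : (a - b) * (Real.exp (m * y) * m) + b * (Real.exp (-c * y) * (-c))
        - a * (Real.exp (c * y) * c)
        = c * ((-b) * (Real.exp (-c * y) - Real.exp (m * y))
          + (-a) * (Real.exp (c * y) - Real.exp (m * y))) := by
      rw [hm, hc]; ring
    rw [hgoal]
    exact mul_nonneg hcpos.le key
  have hmono : MonotoneOn F (Set.Ici 0) := by
    apply monotoneOn_of_deriv_nonneg (convex_Ici 0)
    · exact fun y _ => ((hderiv y).continuousAt).continuousWithinAt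
    · intro y _
      exact ((hderiv y).differentiableAt).differentiableWithinAt
    · intro y hy
      rw [(hderiv y).deriv]
      exact hderiv_nonneg y (by simp at hy ⊢; linarith [hy.le])
  have hF0 : F 0 = 0 := by simp [hF]
  have hFx : 0 ≤ F x := by
    have := hmono (Set.self_mem_Ici) (Set.mem_Ici.2 hx) hx
    rwa [hF0] at this
  have hfact : (a - b) * Real.exp ((a + b) * x) + b * Real.exp (b * x)
      - a * Real.exp (a * x) = Real.exp (m * x) * F x := by
    rw [hF]
    have h1 : (a + b) * x = m * x + m * x := by rw [hm]; ring
    have h2 : b * x = m * x + -c * x := by rw [hm, hc]; ring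
    have h3 : a * x = m * x + c * x := by rw [hm, hc]; ring
    rw [h1, h2, h3, Real.exp_add, Real.exp_add, Real.exp_add]
    ring
  rw [hfact]
  exact mul_nonneg (Real.exp_pos _).le hFx

theorem paoiPdf_isPdf (lam mu li a b : ℝ) (hlam : 0 < lam) (hmu : 0 < mu) (hli : 0 < li)
    (hab : b < a) (ha : a < 0) (hb : b < 0)
    (hsum : a + b = -(lam + mu)) (hprod : a * b = li * mu) :
    (∀ x, 0 ≤ paoiPdf lam mu a b x) ∧
    ∫ x in Set.Ioi (0:ℝ), paoiPdf lam mu a b x = 1 := by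
  have habpos : 0 < a - b := by linarith
  have hlm : 0 < lam + mu := by linarith
  constructor
  · intro x
    unfold paoiPdf
    split_ifs with hx
    · have hk := key_nonneg a b hab ha hb hx
      have h1 : Real.exp (-(lam + mu) * x) = Real.exp ((a + b) * x) := by rw [hsum]
      rw [h1]
      have h2 : 0 ≤ Real.exp ((a + b) * x)
          + (b * Real.exp (b * x) - a * Real.exp (a * x)) / (a - b) := by
        have heq : Real.exp ((a + b) * x)
            + (b * Real.exp (b * x) - a * Real.exp (a * x)) / (a - b)
            = ((a - b) * Real.exp ((a + b) * x) + b * Real.exp (b * x)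
              - a * Real.exp (a * x)) / (a - b) := by
          field_simp
          ring
        rw [heq]
        exact div_nonneg hk habpos.le
      exact mul_nonneg hlm.le h2
    · exact le_refl _
  · have hcongr : ∫ x in Set.Ioi (0:ℝ), paoiPdf lam mu a b x =
        ∫ x in Set.Ioi (0:ℝ), ((lam + mu) * Real.exp ((a + b) * x)
          + ((lam + mu) * b / (a - b)) * Real.exp (b * x)
          + ((lam + mu) * (-a) / (a - b)) * Real.exp (a * x)) := by
      refine setIntegral_congr_fun measurableSet_Ioi (fun x hx => ?_)
      have hx' : (0:ℝ) ≤ x := le_of_lt hx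
      unfold paoiPdf
      rw [if_pos hx', ← hsum]
      field_simp
      ring
    rw [hcongr]
    have hsumneg : a + b < 0 := by linarith
    have i1 := (integrableOn_exp_mul hsumneg).const_mul (lam + mu)
    have i2 := (integrableOn_exp_mul hb).const_mul ((lam + mu) * b / (a - b))
    have i3 := (integrableOn_exp_mul ha).const_mul ((lam + mu) * (-a) / (a - b))
    have i12 : IntegrableOn (fun x : ℝ => (lam + mu) * Real.exp ((a + b) * x)
        + ((lam + mu) * b / (a - b)) * Real.exp (b * x)) (Set.Ioi 0) := i1.add i2
    rw [MeasureTheory.integral_add i12 i3, MeasureTheory.integral_add i1 i2,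
      MeasureTheory.integral_const_mul, MeasureTheory.integral_const_mul,
      MeasureTheory.integral_const_mul,
      integral_exp_mul_Ioi_zero hsumneg, integral_exp_mul_Ioi_zero hb,
      integral_exp_mul_Ioi_zero ha]
    rw [hsum, neg_neg]
    field_simp
    rw [mul_div_cancel_right₀ _ hb.ne, mul_div_cancel_right₀ _ ha.ne]
    ring
end

section
/- With the PAoI density f_P(x) = (λ+μ)(e^{−(λ+μ)x} + (b e^{bx} − a e^{ax})/(a−b)) on x ≥ 0 (a > b negative, a+b = −(λ+μ), ab = λᵢμ), the mean is ∫₀^∞ x f_P(x) dx = 1/(λ+μ) + (λ+μ)/(λᵢμ). -/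
open MeasureTheory

lemma int_key {r : ℝ} (hr : 0 < r) :
    IntegrableOn (fun x : ℝ => x * Real.exp (-(r * x))) (Set.Ioi 0) := by
  have h := integrableOn_rpow_mul_exp_neg_mul_rpow (p := 1) (s := 1) (b := r)
    (by norm_num) one_pos hr
  refine h.congr_fun (fun x hx => ?_) measurableSet_Ioi
  simp [Real.rpow_one, neg_mul]

lemma val_key {r : ℝ} (hr : 0 < r) :
    ∫ x in Set.Ioi (0:ℝ), x * Real.exp (-(r * x)) = 1 / r ^ 2 := by
  have h := Real.integral_rpow_mul_exp_neg_mul_Ioi (a := 2) (r := r) (by norm_num) hr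
  rw [Real.Gamma_two] at h
  have h2 : ∫ t in Set.Ioi (0:ℝ), t ^ ((2:ℝ) - 1) * Real.exp (-(r * t))
      = ∫ x in Set.Ioi (0:ℝ), x * Real.exp (-(r * x)) := by
    refine setIntegral_congr_fun measurableSet_Ioi (fun x hx => ?_)
    norm_num
  rw [h2] at h
  rw [h, mul_one, show (2:ℝ) = ((2:ℕ):ℝ) by norm_num,
    Real.rpow_natCast, div_pow, one_pow]

lemma neg_key {c : ℝ} (hc : c < 0) :
    IntegrableOn (fun x : ℝ => x * Real.exp (c * x)) (Set.Ioi 0) ∧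
    ∫ x in Set.Ioi (0:ℝ), x * Real.exp (c * x) = 1 / c ^ 2 := by
  have hr : 0 < -c := by linarith
  have h1 := int_key hr
  have h2 := val_key hr
  simp only [neg_mul, neg_neg] at h1 h2
  refine ⟨h1, by rw [h2]; ring_nf⟩

theorem paoi_mean (lam mu li a b : ℝ) (hlam : 0 < lam) (hmu : 0 < mu) (hli : 0 < li)
    (hab : b < a) (ha : a < 0) (hb : b < 0)
    (hsum : a + b = -(lam + mu)) (hprod : a * b = li * mu) :
    ∫ x in Set.Ioi (0:ℝ),
        x * ((lam + mu) * (Real.exp (-(lam + mu) * x)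
          + (b * Real.exp (b * x) - a * Real.exp (a * x)) / (a - b)))
      = 1 / (lam + mu) + (lam + mu) / (li * mu) := by
  set L := lam + mu with hL
  have hLpos : 0 < L := by positivity
  have hLneg : -L < 0 := by linarith
  obtain ⟨iL, vL⟩ := neg_key hLneg
  obtain ⟨ia, va⟩ := neg_key ha
  obtain ⟨ib, vb⟩ := neg_key hb
  have habne : a - b ≠ 0 := by linarith
  have key : ∀ x : ℝ,
      x * (L * (Real.exp (-L * x) + (b * Real.exp (b * x) - a * Real.exp (a * x)) / (a - b)))
      = L * (x * Real.exp (-L * x)) + (L * b / (a - b)) * (x * Real.exp (b * x))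
        + (-(L * a / (a - b))) * (x * Real.exp (a * x)) := by
    intro x; field_simp; ring
  simp_rw [key]
  have hA : IntegrableOn (fun x : ℝ => L * (x * Real.exp (-L * x))) (Set.Ioi 0) :=
    iL.const_mul L
  have hB : IntegrableOn (fun x : ℝ => L * b / (a - b) * (x * Real.exp (b * x))) (Set.Ioi 0) :=
    ib.const_mul _
  have hC : IntegrableOn (fun x : ℝ => -(L * a / (a - b)) * (x * Real.exp (a * x))) (Set.Ioi 0) :=
    ia.const_mul _
  have hAB : IntegrableOn (fun x : ℝ => L * (x * Real.exp (-L * x))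
      + L * b / (a - b) * (x * Real.exp (b * x))) (Set.Ioi 0) := hA.add hB
  rw [integral_add hAB hC, integral_add hA hB,
      integral_const_mul, integral_const_mul, integral_const_mul, vL, va, vb]
  have haz : a ≠ 0 := ne_of_lt ha
  have hbz : b ≠ 0 := ne_of_lt hb
  have hLz : L ≠ 0 := ne_of_gt hLpos
  rw [← hprod]
  field_simp
  ring
end

section
/- With the PAoI density f_P as above, the second moment is ∫₀^∞ x² f_P(x) dx = 2/(λ+μ)² + 2(λ+μ)²/(λᵢ²μ²), and hence the variance of PAoI equals 1/(λ+μ)² + (λ+μ)²/(λᵢ²μ²) − 2/(λᵢμ). -/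
open MeasureTheory

lemma pow_mul_exp_integrableOn (n : ℕ) {c : ℝ} (hc : c < 0) :
    IntegrableOn (fun x : ℝ => x ^ n * Real.exp (c * x)) (Set.Ioi 0) := by
  apply integrable_of_isBigO_exp_neg (b := -c/2) (by linarith)
  · exact (continuous_pow n).continuousOn.mul (Real.continuous_exp.comp
      (continuous_const.mul continuous_id)).continuousOn
  · have h0 : Filter.Tendsto (fun x : ℝ => x ^ n * Real.exp (-(-c/2) * x))
        Filter.atTop (nhds 0) := by
      have := tendsto_rpow_mul_exp_neg_mul_atTop_nhds_zero (n : ℝ) (-c/2) (by linarith)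
      refine this.congr' ?_
      filter_upwards [Filter.eventually_gt_atTop (0:ℝ)] with x hx
      rw [Real.rpow_natCast]
    have hO1 : (fun x : ℝ => x ^ n * Real.exp (-(-c/2) * x)) =O[Filter.atTop]
        (fun _ : ℝ => (1:ℝ)) := h0.isBigO_one ℝ
    have hmul := hO1.mul (Asymptotics.isBigO_refl
      (fun x : ℝ => Real.exp (-(-c/2) * x)) Filter.atTop)
    refine hmul.congr (fun x => ?_) (fun x => ?_)
    · rw [mul_assoc, ← Real.exp_add]
      ring_nf
    · rw [one_mul]

lemma pow_mul_exp_integral (n : ℕ) {c : ℝ} (hc : c < 0) :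
    ∫ x in Set.Ioi (0:ℝ), x ^ n * Real.exp (c * x) = n.factorial / (-c) ^ (n + 1) := by
  have h := Real.integral_rpow_mul_exp_neg_mul_Ioi (a := (n:ℝ) + 1) (r := -c)
    (by positivity) (by linarith)
  have hL : ∫ t in Set.Ioi (0:ℝ), t ^ ((n:ℝ) + 1 - 1) * Real.exp (-(-c * t))
      = ∫ x in Set.Ioi (0:ℝ), x ^ n * Real.exp (c * x) := by
    refine setIntegral_congr_fun measurableSet_Ioi fun x hx => ?_
    rw [show (n:ℝ) + 1 - 1 = (n:ℝ) by ring, Real.rpow_natCast]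
    ring_nf
  rw [hL] at h
  rw [h, Real.Gamma_nat_eq_factorial n]
  rw [show ((n:ℝ) + 1) = ((n + 1 : ℕ) : ℝ) by push_cast; ring, Real.rpow_natCast]
  rw [one_div, inv_pow]
  field_simp

lemma combo_integral (k : ℕ) (s a b : ℝ) (hs : 0 < s) (ha : a < 0) (hb : b < 0)
    (hne : b < a) :
    ∫ x in Set.Ioi (0:ℝ),
        x ^ k * (s * (Real.exp (-s * x)
          + (b * Real.exp (b * x) - a * Real.exp (a * x)) / (a - b)))
      = s * ((k.factorial : ℝ) / s ^ (k + 1)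
          + (b * ((k.factorial : ℝ) / (-b) ^ (k + 1))
            - a * ((k.factorial : ℝ) / (-a) ^ (k + 1))) / (a - b)) := by
  have hI1 := pow_mul_exp_integrableOn k (c := -s) (by linarith)
  have hI2 := pow_mul_exp_integrableOn k (c := b) hb
  have hI3 := pow_mul_exp_integrableOn k (c := a) ha
  have hJ1 : Integrable (fun x : ℝ => s * (x ^ k * Real.exp (-s * x)))
      (volume.restrict (Set.Ioi 0)) := hI1.const_mul s
  have hJ2 : Integrable (fun x : ℝ => (s * b / (a - b)) * (x ^ k * Real.exp (b * x)))
      (volume.restrict (Set.Ioi 0)) := hI2.const_mul _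
  have hJ3 : Integrable (fun x : ℝ => (-(s * a / (a - b))) * (x ^ k * Real.exp (a * x)))
      (volume.restrict (Set.Ioi 0)) := hI3.const_mul _
  have hJ23 : Integrable (fun x : ℝ => (s * b / (a - b)) * (x ^ k * Real.exp (b * x))
      + (-(s * a / (a - b))) * (x ^ k * Real.exp (a * x)))
      (volume.restrict (Set.Ioi 0)) := hJ2.add hJ3
  have step : ∫ x in Set.Ioi (0:ℝ),
        x ^ k * (s * (Real.exp (-s * x)
          + (b * Real.exp (b * x) - a * Real.exp (a * x)) / (a - b)))
      = ∫ x in Set.Ioi (0:ℝ),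
        (s * (x ^ k * Real.exp (-s * x))
          + ((s * b / (a - b)) * (x ^ k * Real.exp (b * x))
            + (-(s * a / (a - b))) * (x ^ k * Real.exp (a * x)))) := by
    refine setIntegral_congr_fun measurableSet_Ioi fun x hx => ?_
    have h1 : a - b ≠ 0 := by linarith
    field_simp
    ring
  rw [step, integral_add hJ1 hJ23, integral_add hJ2 hJ3,
    integral_const_mul, integral_const_mul, integral_const_mul,
    pow_mul_exp_integral k (c := -s) (by linarith),
    pow_mul_exp_integral k (c := b) hb,
    pow_mul_exp_integral k (c := a) ha]
  have h1 : a - b ≠ 0 := by linarith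
  have h2 : s ≠ 0 := ne_of_gt hs
  have h3 : (-a) ≠ 0 := by linarith
  have h4 : (-b) ≠ 0 := by linarith
  rw [neg_neg]
  field_simp
  ring

theorem paoi_second_moment_and_variance (lam mu li a b : ℝ)
    (hlam : 0 < lam) (hmu : 0 < mu) (hli : 0 < li)
    (hab : b < a) (ha : a < 0) (hb : b < 0)
    (hsum : a + b = -(lam + mu)) (hprod : a * b = li * mu) :
    (∫ x in Set.Ioi (0:ℝ),
        x^2 * ((lam + mu) * (Real.exp (-(lam + mu) * x)
          + (b * Real.exp (b * x) - a * Real.exp (a * x)) / (a - b)))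
      = 2 / (lam + mu)^2 + 2 * (lam + mu)^2 / (li^2 * mu^2)) ∧
    ((∫ x in Set.Ioi (0:ℝ),
        x^2 * ((lam + mu) * (Real.exp (-(lam + mu) * x)
          + (b * Real.exp (b * x) - a * Real.exp (a * x)) / (a - b))))
      - (∫ x in Set.Ioi (0:ℝ),
          x * ((lam + mu) * (Real.exp (-(lam + mu) * x)
            + (b * Real.exp (b * x) - a * Real.exp (a * x)) / (a - b))))^2
      = 1 / (lam + mu)^2 + (lam + mu)^2 / (li^2 * mu^2) - 2 / (li * mu)) := by
  have hs : 0 < lam + mu := by linarith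
  have h2 := combo_integral 2 (lam + mu) a b hs ha hb hab
  have h1 := combo_integral 1 (lam + mu) a b hs ha hb hab
  simp only [pow_one] at h1
  have hane : a ≠ 0 := ne_of_lt ha
  have hbne : b ≠ 0 := ne_of_lt hb
  have habne : a - b ≠ 0 := by linarith
  have hsne : a + b ≠ 0 := by linarith
  have hpne : li * mu ≠ 0 := by positivity
  have hsne' : lam + mu ≠ 0 := ne_of_gt hs
  have hE2 : (∫ x in Set.Ioi (0:ℝ),
        x^2 * ((lam + mu) * (Real.exp (-(lam + mu) * x)
          + (b * Real.exp (b * x) - a * Real.exp (a * x)) / (a - b))))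
      = 2 / (lam + mu)^2 + 2 * (lam + mu)^2 / (li^2 * mu^2) := by
    rw [h2, show li^2 * mu^2 = (a*b)^2 by rw [hprod]; ring,
      show lam + mu = -(a + b) by linarith]
    norm_num [Nat.factorial]
    rw [show ((-b):ℝ)^3 = -b^3 by ring, show ((-a):ℝ)^3 = -a^3 by ring,
      show ((-b + -a):ℝ)^3 = -(a+b)^3 by ring, show ((-b + -a):ℝ)^2 = (a+b)^2 by ring,
      show ((-b + -a):ℝ) = -(a+b) by ring, div_neg, div_neg, div_neg]
    field_simp
    ring
  have hE1 : (∫ x in Set.Ioi (0:ℝ),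
        x * ((lam + mu) * (Real.exp (-(lam + mu) * x)
          + (b * Real.exp (b * x) - a * Real.exp (a * x)) / (a - b))))
      = 1 / (lam + mu) + (lam + mu) / (li * mu) := by
    rw [h1, ← hprod]
    norm_num [Nat.factorial]
    field_simp
  refine ⟨hE2, ?_⟩
  rw [hE2, hE1]
  field_simp
  ring
end
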